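/- Let R₀ be a family of subsets of Ω containing the empty set and closed under finite intersections, and let λ₀ be a finitely additive set function on R₀ that is strongly additive: λ₀(H₁) + λ₀(H₂) = λ₀(H₁ ∪ H₂) + λ₀(H₁ ∩ H₂) whenever H₁, H₂, H₁ ∪ H₂, H₁ ∩ H₂ ∈ R₀. If R₀ is also closed under finite unions, then λ₀ extends uniquely to a nonnegative finitely additive set function λ₁ on the ring generated by R₀, provided λ₀ is monotone on R₀. -/

import Mathlib

open MeasureTheory

namespace Stmt18Aux

open Finset

variable {Ω : Type*} {ι : Type*} [DecidableEq ι]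

noncomputable def ind (S : Set Ω) : Ω → ℝ := S.indicator 1

open Classical in
lemma ind_apply (S : Set Ω) (x : Ω) : ind S x = if x ∈ S then 1 else 0 := by
  simp [ind, Set.indicator_apply]

/-! ### Combinatorial lemmas -/

lemma neg_one_sum (V : Finset ι) :
    ∑ T ∈ V.powerset, (-1:ℝ)^T.card = if V = ∅ then 1 else 0 := by
  have h := Finset.sum_powerset_neg_one_pow_card (x := V)
  have : ((∑ T ∈ V.powerset, (-1:ℤ)^T.card : ℤ) : ℝ) = ∑ T ∈ V.powerset, (-1:ℝ)^T.card := by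
    push_cast; rfl
  rw [← this, h]
  split_ifs <;> norm_num

lemma sdiff_sign (V : Finset ι) :
    ∑ T ∈ V.powerset, (-1:ℝ)^((V \ T).card) = if V = ∅ then 1 else 0 := by
  rw [← neg_one_sum V]
  refine Finset.sum_nbij' (fun T => V \ T) (fun T => V \ T) ?_ ?_ ?_ ?_ ?_ <;>
    intro T hT <;> simp only [Finset.mem_powerset] at hT ⊢
  · exact Finset.sdiff_subset
  · exact Finset.sdiff_subset
  · exact Finset.sdiff_sdiff_eq_self hT
  · exact Finset.sdiff_sdiff_eq_self hT

lemma sign_filter_sum (U : Finset ι) (i : ι) (hi : i ∈ U) :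
    ∑ T ∈ U.powerset, (if i ∈ T then (-1:ℝ)^((U \ T).card) else 0)
      = if U = {i} then 1 else 0 := by
  rw [← Finset.sum_filter]
  have key : ∑ T ∈ U.powerset.filter (i ∈ ·), (-1:ℝ)^((U \ T).card)
      = ∑ T' ∈ (U.erase i).powerset, (-1:ℝ)^(((U.erase i) \ T').card) := by
    refine Finset.sum_nbij' (fun T => T.erase i) (fun T' => insert i T') ?_ ?_ ?_ ?_ ?_
    · intro T hT
      simp only [Finset.mem_filter, Finset.mem_powerset] at hT ⊢
      exact Finset.erase_subset_erase i hT.1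
    · intro T' hT'
      simp only [Finset.mem_filter, Finset.mem_powerset] at hT' ⊢
      exact ⟨Finset.insert_subset hi (hT'.trans (Finset.erase_subset i U)),
        Finset.mem_insert_self i T'⟩
    · intro T hT
      simp only [Finset.mem_filter, Finset.mem_powerset] at hT
      exact Finset.insert_erase hT.2
    · intro T' hT'
      simp only [Finset.mem_powerset] at hT'
      exact Finset.erase_insert (fun h => (Finset.mem_erase.mp (hT' h)).1 rfl)
    · intro T hT
      simp only [Finset.mem_filter, Finset.mem_powerset] at hT
      congr 2
      ext a
      simp only [Finset.mem_sdiff, Finset.mem_erase]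
      constructor
      · rintro ⟨haU, haT⟩
        have hai : a ≠ i := fun h => haT (h ▸ hT.2)
        exact ⟨⟨hai, haU⟩, fun ⟨_, haT'⟩ => haT haT'⟩
      · rintro ⟨⟨hai, haU⟩, haT⟩
        exact ⟨haU, fun h => haT ⟨hai, h⟩⟩
  rw [key, sdiff_sign]
  have : U.erase i = ∅ ↔ U = {i} := by
    constructor
    · intro h
      rcases (Finset.erase_eq_empty_iff U i).mp h with h' | h'
      · exact absurd (h' ▸ hi) (Finset.notMem_empty i)
      · exact h'
    · intro h; subst h; simp
  simp [this]

lemma innerSum (U : Finset ι) (c : ι → ℝ) :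
    ∑ T ∈ U.powerset, (∑ i ∈ T, c i) * (-1:ℝ)^((U \ T).card)
      = ∑ i ∈ U, c i * (if U = {i} then 1 else 0) := by
  have h1 : ∀ T ∈ U.powerset, (∑ i ∈ T, c i) * (-1:ℝ)^((U \ T).card)
      = ∑ i ∈ U, (if i ∈ T then c i * (-1:ℝ)^((U \ T).card) else 0) := by
    intro T hT
    rw [Finset.sum_mul, ← Finset.sum_filter, Finset.filter_mem_eq_inter,
      Finset.inter_eq_right.mpr (Finset.mem_powerset.mp hT)]
  rw [Finset.sum_congr rfl h1, Finset.sum_comm]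
  refine Finset.sum_congr rfl fun i hi => ?_
  have h2 : ∑ T ∈ U.powerset, (if i ∈ T then c i * (-1:ℝ)^((U \ T).card) else 0)
      = c i * ∑ T ∈ U.powerset, (if i ∈ T then (-1:ℝ)^((U \ T).card) else 0) := by
    rw [Finset.mul_sum]
    refine Finset.sum_congr rfl fun T _ => ?_
    split_ifs <;> ring
  rw [h2, sign_filter_sum U i hi]

lemma pair_reindex (s : Finset ι) (f : Finset ι → Finset ι → ℝ) :
    ∑ T ∈ s.powerset, ∑ u ∈ (s \ T).powerset, f T (T ∪ u)
      = ∑ U ∈ s.powerset, ∑ T ∈ U.powerset, f T U := by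
  rw [Finset.sum_sigma' s.powerset (fun T => (s \ T).powerset) (fun T u => f T (T ∪ u)),
    Finset.sum_sigma' s.powerset (fun U => U.powerset) (fun U T => f T U)]
  refine Finset.sum_nbij' (fun p => ⟨p.1 ∪ p.2, p.1⟩) (fun q => ⟨q.2, q.1 \ q.2⟩) ?_ ?_ ?_ ?_ ?_
  · rintro ⟨T, u⟩ hp
    simp only [Finset.mem_sigma, Finset.mem_powerset] at hp ⊢
    exact ⟨Finset.union_subset hp.1 (hp.2.trans (Finset.sdiff_subset)), Finset.subset_union_left⟩
  · rintro ⟨U, T⟩ hq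
    simp only [Finset.mem_sigma, Finset.mem_powerset] at hq ⊢
    exact ⟨hq.2.trans hq.1, Finset.sdiff_subset_sdiff hq.1 (subset_refl _)⟩
  · rintro ⟨T, u⟩ hp
    simp only [Finset.mem_sigma, Finset.mem_powerset] at hp
    have hdisj : Disjoint T u :=
      Finset.disjoint_right.mpr fun a hau haT => (Finset.mem_sdiff.mp (hp.2 hau)).2 haT
    simp [Finset.union_sdiff_cancel_left hdisj]
  · rintro ⟨U, T⟩ hq
    simp only [Finset.mem_sigma, Finset.mem_powerset] at hq
    simp [Finset.union_sdiff_of_subset hq.2]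
  · rintro ⟨T, u⟩ hp
    rfl

/-! ### Lattice lemmas -/

section lattice

variable {R₀ : Set (Set Ω)} {l₀ : Set Ω → ℝ}

lemma unionMem (hempty : ∅ ∈ R₀) (hunion : ∀ A ∈ R₀, ∀ B ∈ R₀, A ∪ B ∈ R₀)
    (s : Finset ι) (B : ι → Set Ω) (hB : ∀ i ∈ s, B i ∈ R₀) :
    (⋃ i ∈ s, B i) ∈ R₀ := by
  classical
  induction s using Finset.induction_on with
  | empty => simpa using hempty
  | insert a s ha ih =>
    rw [Finset.set_biUnion_insert]
    exact hunion _ (hB a (mem_insert_self a s)) _ (ih fun i hi => hB i (mem_insert_of_mem hi))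

lemma interMem (hinter : ∀ A ∈ R₀, ∀ B ∈ R₀, A ∩ B ∈ R₀)
    (s : Finset ι) (B : ι → Set Ω) {C : Set Ω} (hC : C ∈ R₀) (hB : ∀ i ∈ s, B i ∈ R₀) :
    (C ∩ ⋂ i ∈ s, B i) ∈ R₀ := by
  classical
  induction s using Finset.induction_on generalizing C with
  | empty => simpa using hC
  | insert a s ha ih =>
    rw [Finset.set_biInter_insert, ← Set.inter_assoc]
    exact ih (hinter _ hC _ (hB a (mem_insert_self a s)))
      (fun i hi => hB i (mem_insert_of_mem hi))

lemma biInterMem (hinter : ∀ A ∈ R₀, ∀ B ∈ R₀, A ∩ B ∈ R₀)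
    {s : Finset ι} (hs : s.Nonempty) {B : ι → Set Ω} (hB : ∀ i ∈ s, B i ∈ R₀) :
    (⋂ i ∈ s, B i) ∈ R₀ := by
  classical
  obtain ⟨a, ha⟩ := hs
  have h : (⋂ i ∈ s, B i) = B a ∩ ⋂ i ∈ s, B i := by
    apply subset_antisymm
    · exact Set.subset_inter (Set.biInter_subset_of_mem ha) subset_rfl
    · exact Set.inter_subset_right
  rw [h]
  exact interMem hinter s B (hB a ha) hB

lemma inclusion_exclusion (hinter : ∀ A ∈ R₀, ∀ B ∈ R₀, A ∩ B ∈ R₀)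
    (hempty : ∅ ∈ R₀) (hunion : ∀ A ∈ R₀, ∀ B ∈ R₀, A ∪ B ∈ R₀)
    (hzero : l₀ ∅ = 0)
    (hmodular : ∀ A ∈ R₀, ∀ B ∈ R₀, l₀ A + l₀ B = l₀ (A ∪ B) + l₀ (A ∩ B))
    (s : Finset ι) (B : ι → Set Ω) (hB : ∀ i ∈ s, B i ∈ R₀) (C : Set Ω) (hC : C ∈ R₀) :
    ∑ u ∈ s.powerset, (-1:ℝ)^u.card * l₀ (C ∩ ⋂ i ∈ u, B i)
      = l₀ C - l₀ (⋃ i ∈ s, C ∩ B i) := by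
  classical
  induction s using Finset.induction_on generalizing C with
  | empty => simp [hzero]
  | insert a s ha ih =>
    have hBa : B a ∈ R₀ := hB a (mem_insert_self a s)
    have hBs : ∀ i ∈ s, B i ∈ R₀ := fun i hi => hB i (mem_insert_of_mem hi)
    rw [Finset.sum_powerset_insert ha]
    have h1 : ∑ u ∈ s.powerset, (-1:ℝ)^u.card * l₀ (C ∩ ⋂ i ∈ u, B i)
        = l₀ C - l₀ (⋃ i ∈ s, C ∩ B i) := ih hBs C hC
    have h2 : ∑ u ∈ s.powerset, (-1:ℝ)^(insert a u).card * l₀ (C ∩ ⋂ i ∈ insert a u, B i)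
        = -(l₀ (C ∩ B a) - l₀ (⋃ i ∈ s, (C ∩ B a) ∩ B i)) := by
      have hterm : ∀ u ∈ s.powerset, (-1:ℝ)^(insert a u).card * l₀ (C ∩ ⋂ i ∈ insert a u, B i)
          = -((-1:ℝ)^u.card * l₀ ((C ∩ B a) ∩ ⋂ i ∈ u, B i)) := by
        intro u hu
        have hau : a ∉ u := fun h => ha (Finset.mem_powerset.mp hu h)
        rw [Finset.card_insert_of_notMem hau, Finset.set_biInter_insert, ← Set.inter_assoc,
          pow_succ]
        ring
      rw [Finset.sum_congr rfl hterm, Finset.sum_neg_distrib,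
        ih hBs (C ∩ B a) (hinter _ hC _ hBa)]
    rw [h1, h2, Finset.set_biUnion_insert]
    have hX : C ∩ B a ∈ R₀ := hinter _ hC _ hBa
    have hY : (⋃ i ∈ s, C ∩ B i) ∈ R₀ :=
      unionMem hempty hunion s (fun i => C ∩ B i) (fun i hi => hinter _ hC _ (hBs i hi))
    have hmod := hmodular _ hX _ hY
    have hi2 : (C ∩ B a) ∩ ⋃ i ∈ s, C ∩ B i = ⋃ i ∈ s, (C ∩ B a) ∩ B i := by
      ext x
      simp only [Set.mem_inter_iff, Set.mem_iUnion]
      constructor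
      · rintro ⟨⟨hc, hba⟩, ⟨i, hi, -, hbi⟩⟩
        exact ⟨i, hi, ⟨hc, hba⟩, hbi⟩
      · rintro ⟨i, hi, ⟨hc, hba⟩, hbi⟩
        exact ⟨⟨hc, hba⟩, ⟨i, hi, hc, hbi⟩⟩
    rw [hi2] at hmod
    linarith


lemma key (hempty : ∅ ∈ R₀)
    (hinter : ∀ A ∈ R₀, ∀ B ∈ R₀, A ∩ B ∈ R₀)
    (hunion : ∀ A ∈ R₀, ∀ B ∈ R₀, A ∪ B ∈ R₀)
    (hzero : l₀ ∅ = 0)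
    (hmono : ∀ A ∈ R₀, ∀ B ∈ R₀, A ⊆ B → l₀ A ≤ l₀ B)
    (hmodular : ∀ A ∈ R₀, ∀ B ∈ R₀, l₀ A + l₀ B = l₀ (A ∪ B) + l₀ (A ∩ B))
    (s : Finset ι) (c : ι → ℝ) (A : ι → Set Ω) (hA : ∀ i ∈ s, A i ∈ R₀)
    (hpos : ∀ x, 0 ≤ ∑ i ∈ s, c i * ind (A i) x) :
    0 ≤ ∑ i ∈ s, c i * l₀ (A i) := by
  classical
  set m : Finset ι → ℝ := fun U => l₀ (⋂ i ∈ U, A i) with hm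
  -- the identity:  ∑ i, cᵢ l₀(Aᵢ) = ∑_{T ⊆ s} (∑_{i∈T} cᵢ) ν(T)
  have step1 : ∑ T ∈ s.powerset, ∑ u ∈ (s \ T).powerset,
        (∑ i ∈ T, c i) * ((-1:ℝ)^u.card * m (T ∪ u))
      = ∑ U ∈ s.powerset, ∑ T ∈ U.powerset,
        (∑ i ∈ T, c i) * ((-1:ℝ)^((U \ T).card) * m U) := by
    rw [← pair_reindex s (fun T U => (∑ i ∈ T, c i) * ((-1:ℝ)^((U \ T).card) * m U))]
    refine Finset.sum_congr rfl fun T hT => Finset.sum_congr rfl fun u hu => ?_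
    have hdisj : Disjoint T u := Finset.disjoint_right.mpr fun a hau haT =>
      (Finset.mem_sdiff.mp (Finset.mem_powerset.mp hu hau)).2 haT
    rw [Finset.union_sdiff_cancel_left hdisj]
  have step2 : ∀ U ∈ s.powerset, ∑ T ∈ U.powerset,
        (∑ i ∈ T, c i) * ((-1:ℝ)^((U \ T).card) * m U)
      = (∑ i ∈ U, c i * (if U = {i} then 1 else 0)) * m U := by
    intro U _
    rw [← innerSum U c, Finset.sum_mul]
    exact Finset.sum_congr rfl fun T _ => by ring
  have step3 : ∑ U ∈ s.powerset, (∑ i ∈ U, c i * (if U = {i} then 1 else 0)) * m U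
      = ∑ i ∈ s, c i * l₀ (A i) := by
    have himg : s.image (fun j => ({j} : Finset ι)) ⊆ s.powerset := by
      intro U hU
      obtain ⟨j, hj, rfl⟩ := Finset.mem_image.mp hU
      exact Finset.mem_powerset.mpr (Finset.singleton_subset_iff.mpr hj)
    have hvanish : ∀ U ∈ s.powerset, U ∉ s.image (fun j => ({j} : Finset ι)) →
        (∑ i ∈ U, c i * (if U = {i} then 1 else 0)) * m U = 0 := by
      intro U hU hUim
      have : ∀ i ∈ U, c i * (if U = {i} then 1 else 0) = 0 := by
        intro i hiU
        have hiU' : U ≠ {i} := by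
          intro h
          exact hUim (Finset.mem_image.mpr ⟨i, Finset.mem_powerset.mp hU hiU, h.symm⟩)
        simp [hiU']
      rw [Finset.sum_congr rfl this]
      simp
    rw [← Finset.sum_subset himg hvanish,
      Finset.sum_image (fun a _ b _ h => Finset.singleton_injective h)]
    refine Finset.sum_congr rfl fun j hj => ?_
    simp [hm]
  -- nonnegativity of each term
  rw [← step3, ← Finset.sum_congr rfl step2, ← step1]
  refine Finset.sum_nonneg fun T hT => ?_
  rcases T.eq_empty_or_nonempty with rfl | hne
  · simp
  have hTs : T ⊆ s := Finset.mem_powerset.mp hT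
  set C : Set Ω := ⋂ i ∈ T, A i with hCdef
  have hC : C ∈ R₀ := biInterMem hinter hne (fun i hi => hA i (hTs hi))
  have hAs : ∀ i ∈ s \ T, A i ∈ R₀ := fun i hi => hA i (Finset.sdiff_subset hi)
  have hsum : ∑ u ∈ (s \ T).powerset, (∑ i ∈ T, c i) * ((-1:ℝ)^u.card * m (T ∪ u))
      = (∑ i ∈ T, c i) * (l₀ C - l₀ (⋃ i ∈ s \ T, C ∩ A i)) := by
    rw [← inclusion_exclusion hinter hempty hunion hzero hmodular (s \ T) A hAs C hC,
      Finset.mul_sum]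
    refine Finset.sum_congr rfl fun u _ => ?_
    have : m (T ∪ u) = l₀ (C ∩ ⋂ i ∈ u, A i) := by
      rw [hm]
      simp only []
      rw [Finset.set_biInter_inter T u A]
    rw [this]
  rw [hsum]
  have hUsub : (⋃ i ∈ s \ T, C ∩ A i) ⊆ C := by
    simp only [Set.iUnion_subset_iff]
    exact fun i _ => Set.inter_subset_left
  have hUmem : (⋃ i ∈ s \ T, C ∩ A i) ∈ R₀ :=
    unionMem hempty hunion (s \ T) (fun i => C ∩ A i) (fun i hi => hinter _ hC _ (hAs i hi))
  have hν : 0 ≤ l₀ C - l₀ (⋃ i ∈ s \ T, C ∩ A i) :=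
    sub_nonneg.mpr (hmono _ hUmem _ hC hUsub)
  by_cases hE : C ⊆ ⋃ i ∈ s \ T, A i
  · -- empty atom: ν(T) = 0
    have hCeq : (⋃ i ∈ s \ T, C ∩ A i) = C := by
      apply subset_antisymm hUsub
      intro x hx
      obtain ⟨i, hi, hxi⟩ := Set.mem_iUnion₂.mp (hE hx)
      exact Set.mem_iUnion₂.mpr ⟨i, hi, hx, hxi⟩
    rw [hCeq]
    simp
  · -- nonempty atom: ∑_{i ∈ T} cᵢ ≥ 0
    have : ∃ x ∈ C, x ∉ ⋃ i ∈ s \ T, A i := by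
      by_contra h
      push_neg at h
      exact hE h
    obtain ⟨x, hxC, hxU⟩ := this
    refine mul_nonneg ?_ hν
    have hval : ∀ i ∈ s, c i * ind (A i) x = if i ∈ T then c i else 0 := by
      intro i hi
      by_cases hiT : i ∈ T
      · have hxA : x ∈ A i := by
          have := Set.mem_iInter₂.mp (hCdef ▸ hxC)
          exact this i hiT
        simp [ind_apply, hxA, hiT]
      · have hxA : x ∉ A i := fun hxA =>
          hxU (Set.mem_iUnion₂.mpr ⟨i, Finset.mem_sdiff.mpr ⟨hi, hiT⟩, hxA⟩)
        simp [ind_apply, hxA, hiT]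
    have h0 := hpos x
    rw [Finset.sum_congr rfl hval, Finset.sum_ite_mem,
      Finset.inter_eq_right.mpr hTs] at h0
    exact h0

end lattice


/-! ### Indicator identities -/

lemma ind_mul (S T : Set Ω) : ind S * ind T = ind (S ∩ T) := by
  classical
  funext x
  simp only [Pi.mul_apply, ind_apply, Set.mem_inter_iff]
  by_cases hS : x ∈ S <;> by_cases hT : x ∈ T <;> simp [hS, hT]

lemma ind_union_eq (S T : Set Ω) : ind (S ∪ T) = ind S + ind T - ind S * ind T := by
  classical
  funext x
  simp only [Pi.sub_apply, Pi.add_apply, Pi.mul_apply, ind_apply, Set.mem_union]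
  by_cases hS : x ∈ S <;> by_cases hT : x ∈ T <;> simp [hS, hT]

lemma ind_diff_eq (S T : Set Ω) : ind (S \ T) = ind S - ind S * ind T := by
  classical
  funext x
  simp only [Pi.sub_apply, Pi.mul_apply, ind_apply, Set.mem_diff]
  by_cases hS : x ∈ S <;> by_cases hT : x ∈ T <;> simp [hS, hT]

/-! ### The span of indicators -/

variable (R₀ : Set (Set Ω)) in
noncomputable def sp : Submodule ℝ (Ω → ℝ) :=
  Submodule.span ℝ {f : Ω → ℝ | ∃ A ∈ R₀, f = ind A}

section spanpart

variable {R₀ : Set (Set Ω)} {l₀ : Set Ω → ℝ}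

lemma mul_mem_sp (hinter : ∀ A ∈ R₀, ∀ B ∈ R₀, A ∩ B ∈ R₀)
    {f g : Ω → ℝ} (hf : f ∈ sp R₀) (hg : g ∈ sp R₀) : f * g ∈ sp R₀ := by
  have hgen : ∀ A ∈ R₀, ∀ g ∈ sp R₀, ind A * g ∈ sp R₀ := by
    intro A hA g hg
    induction hg using Submodule.span_induction with
    | mem x hx =>
      obtain ⟨B, hB, rfl⟩ := hx
      rw [ind_mul]
      exact Submodule.subset_span ⟨A ∩ B, hinter _ hA _ hB, rfl⟩
    | zero => rw [mul_zero]; exact Submodule.zero_mem _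
    | add x y _ _ hx hy => rw [mul_add]; exact Submodule.add_mem _ hx hy
    | smul a x _ hx => rw [mul_smul_comm]; exact Submodule.smul_mem _ _ hx
  induction hf using Submodule.span_induction with
  | mem x hx =>
    obtain ⟨A, hA, rfl⟩ := hx
    exact hgen A hA g hg
  | zero => rw [zero_mul]; exact Submodule.zero_mem _
  | add x y _ _ hx hy => rw [add_mul]; exact Submodule.add_mem _ hx hy
  | smul a x _ hx => rw [smul_mul_assoc]; exact Submodule.smul_mem _ _ hx

/-- the sets whose indicator lies in the span -/
def Good (R₀ : Set (Set Ω)) (S : Set Ω) : Prop := ind S ∈ sp R₀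

lemma good_of_mem {A : Set Ω} (hA : A ∈ R₀) : Good R₀ A :=
  Submodule.subset_span ⟨A, hA, rfl⟩

lemma good_ring (hinter : ∀ A ∈ R₀, ∀ B ∈ R₀, A ∩ B ∈ R₀) :
    IsSetRing {S : Set Ω | Good R₀ S} := by
  constructor
  · show ind (∅ : Set Ω) ∈ sp R₀
    have : ind (∅ : Set Ω) = 0 := by funext x; simp [ind]
    rw [this]; exact Submodule.zero_mem _
  · intro S T hS hT
    show ind (S ∪ T) ∈ sp R₀
    rw [ind_union_eq]
    exact Submodule.sub_mem _ (Submodule.add_mem _ hS hT) (mul_mem_sp hinter hS hT)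
  · intro S T hS hT
    show ind (S \ T) ∈ sp R₀
    rw [ind_diff_eq]
    exact Submodule.sub_mem _ hS (mul_mem_sp hinter hS hT)

/-- the generated ring -/
def Rg (R₀ : Set (Set Ω)) : Set (Set Ω) :=
  ⋂₀ {𝒞 : Set (Set Ω) | IsSetRing 𝒞 ∧ R₀ ⊆ 𝒞}

lemma subset_rg : R₀ ⊆ Rg R₀ := fun A hA _ h𝒞 => h𝒞.2 hA

lemma rg_isSetRing : IsSetRing (Rg R₀) := by
  constructor
  · exact fun 𝒞 h𝒞 => h𝒞.1.empty_mem
  · intro S T hS hT 𝒞 h𝒞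
    exact h𝒞.1.union_mem (hS 𝒞 h𝒞) (hT 𝒞 h𝒞)
  · intro S T hS hT 𝒞 h𝒞
    exact h𝒞.1.sdiff_mem (hS 𝒞 h𝒞) (hT 𝒞 h𝒞)

lemma rg_subset_good (hinter : ∀ A ∈ R₀, ∀ B ∈ R₀, A ∩ B ∈ R₀) :
    Rg R₀ ⊆ {S : Set Ω | Good R₀ S} :=
  Set.sInter_subset_of_mem ⟨good_ring hinter, fun _ hA => good_of_mem hA⟩

/-- a value arising from a finite-linear-combination representation of `ind S` -/
def RepVal (R₀ : Set (Set Ω)) (l₀ : Set Ω → ℝ) (S : Set Ω) (r : ℝ) : Prop :=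
  ∃ (n : ℕ) (c : Fin n → ℝ) (A : Fin n → Set Ω),
    (∀ i, A i ∈ R₀) ∧ (∀ x, ind S x = ∑ i, c i * ind (A i) x) ∧ r = ∑ i, c i * l₀ (A i)

lemma repval_exists {S : Set Ω} (h : Good R₀ S) : ∃ r, RepVal R₀ l₀ S r := by
  obtain ⟨n, f, g, hsum⟩ := Submodule.mem_span_set'.mp h
  have hgA : ∀ i : Fin n, ∃ A ∈ R₀, (g i : Ω → ℝ) = ind A := fun i => (g i).2
  choose A hA hind using hgA
  refine ⟨∑ i, f i * l₀ (A i), n, f, A, hA, ?_, rfl⟩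
  intro x
  rw [show ind S = ∑ i, f i • (g i : Ω → ℝ) from hsum.symm]
  rw [Finset.sum_apply]
  refine Finset.sum_congr rfl fun i _ => ?_
  rw [hind i]
  rfl


lemma repval_nonneg (hempty : ∅ ∈ R₀)
    (hinter : ∀ A ∈ R₀, ∀ B ∈ R₀, A ∩ B ∈ R₀)
    (hunion : ∀ A ∈ R₀, ∀ B ∈ R₀, A ∪ B ∈ R₀)
    (hzero : l₀ ∅ = 0)
    (hmono : ∀ A ∈ R₀, ∀ B ∈ R₀, A ⊆ B → l₀ A ≤ l₀ B)
    (hmodular : ∀ A ∈ R₀, ∀ B ∈ R₀, l₀ A + l₀ B = l₀ (A ∪ B) + l₀ (A ∩ B))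
    {S : Set Ω} {r : ℝ} (h : RepVal R₀ l₀ S r) : 0 ≤ r := by
  obtain ⟨n, c, A, hA, hrep, rfl⟩ := h
  refine key hempty hinter hunion hzero hmono hmodular Finset.univ c A (fun i _ => hA i) ?_
  intro x
  rw [← hrep x, ind_apply]
  split_ifs <;> norm_num

lemma repval_unique (hempty : ∅ ∈ R₀)
    (hinter : ∀ A ∈ R₀, ∀ B ∈ R₀, A ∩ B ∈ R₀)
    (hunion : ∀ A ∈ R₀, ∀ B ∈ R₀, A ∪ B ∈ R₀)
    (hzero : l₀ ∅ = 0)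
    (hmono : ∀ A ∈ R₀, ∀ B ∈ R₀, A ⊆ B → l₀ A ≤ l₀ B)
    (hmodular : ∀ A ∈ R₀, ∀ B ∈ R₀, l₀ A + l₀ B = l₀ (A ∪ B) + l₀ (A ∩ B))
    {S : Set Ω} {r r' : ℝ} (h : RepVal R₀ l₀ S r) (h' : RepVal R₀ l₀ S r') : r = r' := by
  obtain ⟨n, c, A, hA, hrep, rfl⟩ := h
  obtain ⟨n', c', A', hA', hrep', rfl⟩ := h'
  have main : ∀ (d d' : ℝ), (∀ x, 0 ≤ d * ind S x + d' * ind S x) →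
      0 ≤ d * ∑ i, c i * l₀ (A i) + d' * ∑ i, c' i * l₀ (A' i) := by
    intro d d' hdd
    have := key hempty hinter hunion hzero hmono hmodular (Finset.univ : Finset (Fin n ⊕ Fin n'))
      (Sum.elim (fun i => d * c i) (fun i => d' * c' i))
      (Sum.elim A A')
      (fun i _ => by cases i with
        | inl i => exact hA i
        | inr i => exact hA' i)
      (fun x => by
        rw [Fintype.sum_sum_type]
        simp only [Sum.elim_inl, Sum.elim_inr]
        have e1 : ∑ i, d * c i * ind (A i) x = d * ind S x := by
          rw [hrep x, Finset.mul_sum]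
          exact Finset.sum_congr rfl fun i _ => by ring
        have e2 : ∑ i, d' * c' i * ind (A' i) x = d' * ind S x := by
          rw [hrep' x, Finset.mul_sum]
          exact Finset.sum_congr rfl fun i _ => by ring
        rw [e1, e2]
        exact hdd x)
    rw [Fintype.sum_sum_type] at this
    simp only [Sum.elim_inl, Sum.elim_inr] at this
    have e1 : ∑ i, d * c i * l₀ (A i) = d * ∑ i, c i * l₀ (A i) := by
      rw [Finset.mul_sum]; exact Finset.sum_congr rfl fun i _ => by ring
    have e2 : ∑ i, d' * c' i * l₀ (A' i) = d' * ∑ i, c' i * l₀ (A' i) := by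
      rw [Finset.mul_sum]; exact Finset.sum_congr rfl fun i _ => by ring
    rw [e1, e2] at this
    exact this
  have h1 := main 1 (-1) (fun x => by ring_nf; exact le_refl 0)
  have h2 := main (-1) 1 (fun x => by ring_nf; exact le_refl 0)
  linarith

lemma repval_add {S T X : Set Ω} {r r' : ℝ}
    (h : RepVal R₀ l₀ S r) (h' : RepVal R₀ l₀ T r')
    (hX : ∀ x, ind X x = ind S x + ind T x) : RepVal R₀ l₀ X (r + r') := by
  obtain ⟨n, c, A, hA, hrep, rfl⟩ := h
  obtain ⟨n', c', A', hA', hrep', rfl⟩ := h'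
  refine ⟨n + n', Fin.append c c', Fin.append A A', ?_, ?_, ?_⟩
  · intro i
    refine Fin.addCases (fun i => ?_) (fun i => ?_) i
    · rw [Fin.append_left]; exact hA i
    · rw [Fin.append_right]; exact hA' i
  · intro x
    rw [hX x, hrep x, hrep' x, Fin.sum_univ_add]
    congr 1
    · exact Finset.sum_congr rfl fun i _ => by rw [Fin.append_left, Fin.append_left]
    · exact Finset.sum_congr rfl fun i _ => by rw [Fin.append_right, Fin.append_right]
  · rw [Fin.sum_univ_add]
    congr 1
    · exact Finset.sum_congr rfl fun i _ => by rw [Fin.append_left, Fin.append_left]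
    · exact Finset.sum_congr rfl fun i _ => by rw [Fin.append_right, Fin.append_right]

open Classical in
noncomputable def extFun (R₀ : Set (Set Ω)) (l₀ : Set Ω → ℝ) (S : Set Ω) : ℝ :=
  if h : ∃ r, RepVal R₀ l₀ S r then h.choose else 0

lemma extFun_eq (hempty : ∅ ∈ R₀)
    (hinter : ∀ A ∈ R₀, ∀ B ∈ R₀, A ∩ B ∈ R₀)
    (hunion : ∀ A ∈ R₀, ∀ B ∈ R₀, A ∪ B ∈ R₀)
    (hzero : l₀ ∅ = 0)
    (hmono : ∀ A ∈ R₀, ∀ B ∈ R₀, A ⊆ B → l₀ A ≤ l₀ B)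
    (hmodular : ∀ A ∈ R₀, ∀ B ∈ R₀, l₀ A + l₀ B = l₀ (A ∪ B) + l₀ (A ∩ B))
    {S : Set Ω} {r : ℝ} (h : RepVal R₀ l₀ S r) : extFun R₀ l₀ S = r := by
  classical
  have hex : ∃ r, RepVal R₀ l₀ S r := ⟨r, h⟩
  rw [extFun]
  rw [dif_pos hex]
  exact repval_unique hempty hinter hunion hzero hmono hmodular hex.choose_spec h

lemma repval_base {A : Set Ω} (hA : A ∈ R₀) : RepVal R₀ l₀ A (l₀ A) := by
  refine ⟨1, fun _ => 1, fun _ => A, fun _ => hA, fun x => ?_, ?_⟩ <;> simp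

end spanpart


/-! ### Uniqueness: properties of any additive extension -/

section uniq

variable {R₀ : Set (Set Ω)} {l₀ : Set Ω → ℝ} {l₂ : Set Ω → ℝ}

lemma l2_zero (hadd : ∀ A ∈ Rg R₀, ∀ B ∈ Rg R₀, Disjoint A B → l₂ (A ∪ B) = l₂ A + l₂ B) :
    l₂ (∅ : Set Ω) = 0 := by
  have h := hadd ∅ (rg_isSetRing.empty_mem) ∅ (rg_isSetRing.empty_mem) disjoint_bot_left
  simp only [Set.union_empty] at h
  linarith

lemma l2_biUnion (hadd : ∀ A ∈ Rg R₀, ∀ B ∈ Rg R₀, Disjoint A B → l₂ (A ∪ B) = l₂ A + l₂ B)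
    (s : Finset ι) (E : ι → Set Ω) (hE : ∀ i ∈ s, E i ∈ Rg R₀)
    (hdisj : ∀ i ∈ s, ∀ j ∈ s, i ≠ j → Disjoint (E i) (E j)) :
    l₂ (⋃ i ∈ s, E i) = ∑ i ∈ s, l₂ (E i) := by
  classical
  induction s using Finset.induction_on with
  | empty => simpa using l2_zero hadd
  | insert a s ha ih =>
    rw [Finset.set_biUnion_insert, Finset.sum_insert ha]
    have hEa : E a ∈ Rg R₀ := hE a (mem_insert_self a s)
    have hEs : ∀ i ∈ s, E i ∈ Rg R₀ := fun i hi => hE i (mem_insert_of_mem hi)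
    have hUs : (⋃ i ∈ s, E i) ∈ Rg R₀ := by
      have : IsSetRing (Rg R₀) := rg_isSetRing
      exact this.biUnion_mem s hEs
    have hd : Disjoint (E a) (⋃ i ∈ s, E i) := by
      rw [Set.disjoint_left]
      intro x hxa hxU
      obtain ⟨i, hi, hxi⟩ := Set.mem_iUnion₂.mp hxU
      have : i ≠ a := fun h => ha (h ▸ hi)
      exact Set.disjoint_left.mp
        (hdisj a (mem_insert_self a s) i (mem_insert_of_mem hi) (Ne.symm this)) hxa hxi
    rw [hadd _ hEa _ hUs hd, ih hEs
      (fun i hi j hj hij => hdisj i (mem_insert_of_mem hi) j (mem_insert_of_mem hj) hij)]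


lemma l2_rep (hempty : ∅ ∈ R₀)
    (hinter : ∀ A ∈ R₀, ∀ B ∈ R₀, A ∩ B ∈ R₀)
    (hunion : ∀ A ∈ R₀, ∀ B ∈ R₀, A ∪ B ∈ R₀)
    (hadd : ∀ A ∈ Rg R₀, ∀ B ∈ Rg R₀, Disjoint A B → l₂ (A ∪ B) = l₂ A + l₂ B)
    (hl2R : ∀ A ∈ R₀, l₂ A = l₀ A)
    {S : Set Ω} (hS : S ∈ Rg R₀) {n : ℕ} {c : Fin n → ℝ} {A : Fin n → Set Ω}
    (hA : ∀ i, A i ∈ R₀) (hrep : ∀ x, ind S x = ∑ i, c i * ind (A i) x) :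
    l₂ S = ∑ i, c i * l₀ (A i) := by
  classical
  set Ps : Finset (Finset (Fin n)) := Finset.univ.powerset.filter (· ≠ ∅) with hPs
  set E : Finset (Fin n) → Set Ω :=
    fun P => (⋂ i ∈ P, A i) \ (⋃ i ∈ Pᶜ, A i) with hE
  have mem_E : ∀ (P : Finset (Fin n)) (x : Ω), x ∈ E P ↔ ∀ i, (x ∈ A i ↔ i ∈ P) := by
    intro P x
    rw [hE]
    simp only [Set.mem_diff, Set.mem_iInter, Set.mem_iUnion, Finset.mem_compl, not_exists]
    constructor
    · rintro ⟨h1, h2⟩ i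
      exact ⟨fun hx => by by_contra hiP; exact h2 i hiP hx, h1 i⟩
    · intro h
      exact ⟨fun i hi => (h i).mpr hi, fun i hi hx => hi ((h i).mp hx)⟩
  have hE_mem : ∀ P ∈ Ps, E P ∈ Rg R₀ := by
    intro P hP
    rw [hPs, Finset.mem_filter] at hP
    have hPne : P.Nonempty := Finset.nonempty_iff_ne_empty.mpr hP.2
    have h1 : (⋂ i ∈ P, A i) ∈ R₀ := biInterMem hinter hPne (fun i _ => hA i)
    have h2 : (⋃ i ∈ Pᶜ, A i) ∈ R₀ := unionMem hempty hunion Pᶜ A (fun i _ => hA i)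
    exact rg_isSetRing.sdiff_mem (subset_rg h1) (subset_rg h2)
  have hE_disj : ∀ (P Q : Finset (Fin n)), P ≠ Q → Disjoint (E P) (E Q) := by
    intro P Q hPQ
    rw [Set.disjoint_left]
    intro x hxP hxQ
    refine hPQ (Finset.ext fun i => ?_)
    exact ((mem_E P x).mp hxP i).symm.trans ((mem_E Q x).mp hxQ i)
  have hPx : ∀ x : Ω, x ∈ E (Finset.univ.filter (fun i => x ∈ A i)) := by
    intro x
    rw [mem_E]
    intro i
    simp
  have hA_eq : ∀ j, A j = ⋃ P ∈ Ps.filter (j ∈ ·), E P := by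
    intro j
    ext x
    constructor
    · intro hxA
      set P := Finset.univ.filter (fun i => x ∈ A i) with hPdef
      have hjP : j ∈ P := by rw [hPdef]; simp [hxA]
      refine Set.mem_iUnion₂.mpr ⟨P, ?_, hPx x⟩
      rw [Finset.mem_filter, hPs, Finset.mem_filter]
      exact ⟨⟨Finset.mem_powerset.mpr (Finset.subset_univ P),
        Finset.nonempty_iff_ne_empty.mp ⟨j, hjP⟩⟩, hjP⟩
    · intro hx
      obtain ⟨P, hP, hxP⟩ := Set.mem_iUnion₂.mp hx
      rw [Finset.mem_filter] at hP
      exact ((mem_E P x).mp hxP j).mpr hP.2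
  have hσ : ∀ (P : Finset (Fin n)), ∀ x ∈ E P, ind S x = ∑ i ∈ P, c i := by
    intro P x hx
    rw [hrep x]
    have : ∀ i ∈ Finset.univ, c i * ind (A i) x = if i ∈ P then c i else 0 := by
      intro i _
      rw [ind_apply]
      by_cases hiP : i ∈ P
      · simp [hiP, ((mem_E P x).mp hx i).mpr hiP]
      · have : x ∉ A i := fun h => hiP (((mem_E P x).mp hx i).mp h)
        simp [hiP, this]
    rw [Finset.sum_congr rfl this, Finset.sum_ite_mem, Finset.univ_inter]
  have hSP : ∀ P ∈ Ps, l₂ (S ∩ E P) = (∑ i ∈ P, c i) * l₂ (E P) := by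
    intro P _
    by_cases hEP : E P = ∅
    · rw [hEP, Set.inter_empty, l2_zero hadd, mul_zero]
    · obtain ⟨x, hx⟩ := Set.nonempty_iff_ne_empty.mpr hEP
      have hsx := hσ P x hx
      by_cases hxS : x ∈ S
      · have hσ1 : ∑ i ∈ P, c i = 1 := by rw [← hsx, ind_apply, if_pos hxS]
        have hSE : S ∩ E P = E P := by
          refine Set.inter_eq_right.mpr fun y hy => ?_
          have := (hσ P y hy).trans hσ1
          rw [ind_apply] at this
          by_contra hyS
          rw [if_neg hyS] at this
          norm_num at this
        rw [hSE, hσ1, one_mul]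
      · have hσ0 : ∑ i ∈ P, c i = 0 := by rw [← hsx, ind_apply, if_neg hxS]
        have hSE : S ∩ E P = ∅ := by
          ext y
          simp only [Set.mem_inter_iff, Set.mem_empty_iff_false, iff_false, not_and]
          intro hyS hyE
          have := (hσ P y hyE).trans hσ0
          rw [ind_apply, if_pos hyS] at this
          norm_num at this
        rw [hSE, l2_zero hadd, hσ0, zero_mul]
  have hS_eq : S = ⋃ P ∈ Ps, S ∩ E P := by
    ext x
    constructor
    · intro hxS
      set P := Finset.univ.filter (fun i => x ∈ A i) with hPdef
      have hPne : P ≠ ∅ := by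
        intro h
        have h1 : ind S x = 1 := by rw [ind_apply, if_pos hxS]
        have h2 : ind S x = ∑ i ∈ P, c i := hσ P x (hPx x)
        rw [h, Finset.sum_empty] at h2
        rw [h1] at h2
        norm_num at h2
      refine Set.mem_iUnion₂.mpr ⟨P, ?_, hxS, hPx x⟩
      rw [hPs, Finset.mem_filter]
      exact ⟨Finset.mem_powerset.mpr (Finset.subset_univ P), hPne⟩
    · intro hx
      obtain ⟨P, _, hxP⟩ := Set.mem_iUnion₂.mp hx
      exact hxP.1
  -- main computation
  have step1 : l₂ S = ∑ P ∈ Ps, l₂ (S ∩ E P) := by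
    conv_lhs => rw [hS_eq]
    exact l2_biUnion hadd Ps (fun P => S ∩ E P)
      (fun P hP => rg_isSetRing.inter_mem hS (hE_mem P hP))
      (fun P _ Q _ hPQ =>
        (hE_disj P Q hPQ).mono Set.inter_subset_right Set.inter_subset_right)
  have step2 : ∑ P ∈ Ps, l₂ (S ∩ E P)
      = ∑ P ∈ Ps, ∑ i ∈ Finset.univ, (if i ∈ P then c i * l₂ (E P) else 0) := by
    refine Finset.sum_congr rfl fun P hP => ?_
    rw [hSP P hP, Finset.sum_ite_mem, Finset.univ_inter, Finset.sum_mul]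
  have step3 : ∑ P ∈ Ps, ∑ i ∈ Finset.univ, (if i ∈ P then c i * l₂ (E P) else 0)
      = ∑ i, c i * l₂ (A i) := by
    rw [Finset.sum_comm]
    refine Finset.sum_congr rfl fun i _ => ?_
    rw [← Finset.sum_filter]
    have : l₂ (A i) = ∑ P ∈ Ps.filter (i ∈ ·), l₂ (E P) := by
      rw [hA_eq i]
      exact l2_biUnion hadd _ E
        (fun P hP => hE_mem P (Finset.mem_of_mem_filter P hP))
        (fun P _ Q _ hPQ => hE_disj P Q hPQ)
    rw [this, Finset.mul_sum]
  rw [step1, step2, step3]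
  exact Finset.sum_congr rfl fun i _ => by rw [hl2R _ (hA i)]

end uniq

end Stmt18Aux

open Stmt18Aux in
/-- a monotone, modular (strongly additive) set function `λ₀`, vanishing
at `∅`, on a lattice of sets `R₀` extends uniquely to a nonnegative finitely additive
set function on the ring generated by `R₀`. -/
theorem stmt18 {Ω : Type*} (R₀ : Set (Set Ω)) (l₀ : Set Ω → ℝ)
    (hempty : ∅ ∈ R₀)
    (hinter : ∀ A ∈ R₀, ∀ B ∈ R₀, A ∩ B ∈ R₀)
    (hunion : ∀ A ∈ R₀, ∀ B ∈ R₀, A ∪ B ∈ R₀)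
    (hzero : l₀ ∅ = 0)
    (hmono : ∀ A ∈ R₀, ∀ B ∈ R₀, A ⊆ B → l₀ A ≤ l₀ B)
    (hmodular : ∀ A ∈ R₀, ∀ B ∈ R₀, l₀ A + l₀ B = l₀ (A ∪ B) + l₀ (A ∩ B)) :
    ∃ l₁ : Set Ω → ℝ,
      (∀ A ∈ ⋂₀ {𝒞 : Set (Set Ω) | MeasureTheory.IsSetRing 𝒞 ∧ R₀ ⊆ 𝒞}, 0 ≤ l₁ A) ∧
      (∀ A ∈ ⋂₀ {𝒞 : Set (Set Ω) | MeasureTheory.IsSetRing 𝒞 ∧ R₀ ⊆ 𝒞},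
        ∀ B ∈ ⋂₀ {𝒞 : Set (Set Ω) | MeasureTheory.IsSetRing 𝒞 ∧ R₀ ⊆ 𝒞},
          Disjoint A B → l₁ (A ∪ B) = l₁ A + l₁ B) ∧
      (∀ A ∈ R₀, l₁ A = l₀ A) ∧
      ∀ l₂ : Set Ω → ℝ,
        ((∀ A ∈ ⋂₀ {𝒞 : Set (Set Ω) | MeasureTheory.IsSetRing 𝒞 ∧ R₀ ⊆ 𝒞}, 0 ≤ l₂ A) ∧
         (∀ A ∈ ⋂₀ {𝒞 : Set (Set Ω) | MeasureTheory.IsSetRing 𝒞 ∧ R₀ ⊆ 𝒞},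
           ∀ B ∈ ⋂₀ {𝒞 : Set (Set Ω) | MeasureTheory.IsSetRing 𝒞 ∧ R₀ ⊆ 𝒞},
             Disjoint A B → l₂ (A ∪ B) = l₂ A + l₂ B) ∧
         (∀ A ∈ R₀, l₂ A = l₀ A)) →
        ∀ A ∈ ⋂₀ {𝒞 : Set (Set Ω) | MeasureTheory.IsSetRing 𝒞 ∧ R₀ ⊆ 𝒞}, l₂ A = l₁ A := by
  classical
  have hRg : (⋂₀ {𝒞 : Set (Set Ω) | MeasureTheory.IsSetRing 𝒞 ∧ R₀ ⊆ 𝒞}) = Rg R₀ := rfl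
  refine ⟨extFun R₀ l₀, ?_, ?_, ?_, ?_⟩
  · -- nonnegativity
    intro A hA
    rw [hRg] at hA
    obtain ⟨r, hr⟩ := repval_exists (l₀ := l₀) (rg_subset_good hinter hA)
    rw [extFun_eq hempty hinter hunion hzero hmono hmodular hr]
    exact repval_nonneg hempty hinter hunion hzero hmono hmodular hr
  · -- additivity
    intro A hA B hB hdisj
    rw [hRg] at hA hB
    obtain ⟨r, hr⟩ := repval_exists (l₀ := l₀) (rg_subset_good hinter hA)
    obtain ⟨r', hr'⟩ := repval_exists (l₀ := l₀) (rg_subset_good hinter hB)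
    have hX : ∀ x, ind (A ∪ B) x = ind A x + ind B x := by
      intro x
      rw [ind_apply, ind_apply, ind_apply]
      by_cases hxA : x ∈ A <;> by_cases hxB : x ∈ B
      · exact absurd hxB (Set.disjoint_left.mp hdisj hxA)
      · simp [hxA, hxB]
      · simp [hxA, hxB]
      · simp [hxA, hxB]
    have hsum := repval_add hr hr' hX
    rw [extFun_eq hempty hinter hunion hzero hmono hmodular hsum,
      extFun_eq hempty hinter hunion hzero hmono hmodular hr,
      extFun_eq hempty hinter hunion hzero hmono hmodular hr']
  · -- extension
    intro A hA
    exact extFun_eq hempty hinter hunion hzero hmono hmodular (repval_base hA)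
  · -- uniqueness
    rintro l₂ ⟨-, h2add, h2R⟩ A hA
    rw [hRg] at hA
    obtain ⟨r, hr⟩ := repval_exists (l₀ := l₀) (rg_subset_good hinter hA)
    obtain ⟨n, c, AA, hAA, hrep, hre⟩ := hr
    have h1 : l₂ A = ∑ i, c i * l₀ (AA i) :=
      l2_rep hempty hinter hunion h2add h2R hA hAA hrep
    rw [h1, extFun_eq hempty hinter hunion hzero hmono hmodular
      ⟨n, c, AA, hAA, hrep, hre⟩, hre]
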